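/- Let G be a finite simple graph on 2m vertices and let k be a natural number such that every induced subgraph of G having a unique perfect matching has at most k vertices. Then every forcing set of every perfect matching of G has cardinality at least m − k/2; equivalently, the forcing number of every perfect matching of G is at least (2m − k)/2. -/

import Mathlib

/-- If `G` is a finite graph on `2m` vertices in which every induced subgraph with a
unique perfect matching has at most `k` vertices, then every forcing set of every
perfect matching of `G` has cardinality at least `m - k/2`. -/
theorem forcing_lower_bound_of_induced_bound {V : Type*} [Fintype V]
    (G : SimpleGraph V) (m k : ℕ) (hcard : Fintype.card V = 2 * m)
    (hk : ∀ A : Set V,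
      (∃! N : (G.induce A).Subgraph, N.IsPerfectMatching) → A.ncard ≤ k)
    (M : G.Subgraph) (hM : M.IsPerfectMatching)
    (S : Set (Sym2 V)) (hS : S ⊆ M.edgeSet)
    (hforce : ∀ M' : G.Subgraph, M'.IsPerfectMatching → S ⊆ M'.edgeSet → M' = M) :
    m - k / 2 ≤ S.ncard := by
  classical
  -- uniqueness of M-partners
  have huniq : ∀ v w w', M.Adj v w → M.Adj v w' → w = w' := by
    intro v w w' h1 h2
    obtain ⟨u, -, hu⟩ := hM.1 (hM.2 v)
    rw [hu w h1, hu w' h2]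
  -- A : the set of vertices not covered by S
  set A : Set V := {v | ∀ e ∈ S, v ∉ e} with hA
  -- M-partner of a vertex in A stays in A
  have hkeep : ∀ v w, v ∈ A → M.Adj v w → w ∈ A := by
    intro v w hv hvw e heS hwe
    have heM := hS heS
    induction e using Sym2.ind with
    | _ a b =>
      rw [SimpleGraph.Subgraph.mem_edgeSet] at heM
      rcases Sym2.mem_iff.mp hwe with rfl | rfl
      · exact hv _ heS (huniq w v b (M.adj_symm hvw) heM ▸ Sym2.mem_mk_right w v)
      · exact hv _ heS
          (huniq w v a (M.adj_symm hvw) (M.adj_symm heM) ▸ Sym2.mem_mk_left v w)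
  -- the candidate unique perfect matching on `induce A`
  have hindadj : ∀ (a b : A), (G.induce A).Adj a b ↔ G.Adj a.1 b.1 := by
    intro a b; rfl
  let N₀ : (G.induce A).Subgraph :=
    { verts := Set.univ
      Adj := fun a b => M.Adj a.1 b.1
      adj_sub := fun {a b} h => (hindadj a b).mpr (M.adj_sub h)
      edge_vert := fun _ => Set.mem_univ _
      symm := ⟨fun a b h => M.adj_symm h⟩ }
  have hN₀ : N₀.IsPerfectMatching := by
    constructor
    · intro a _
      obtain ⟨w, hw, -⟩ := hM.1 (hM.2 a.1)
      refine ⟨⟨w, hkeep a.1 w a.2 hw⟩, hw, ?_⟩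
      intro c hc
      exact Subtype.ext (huniq a.1 c.1 w hc hw)
    · intro a; exact Set.mem_univ _
  -- uniqueness of perfect matching on `induce A`
  have huniqN : ∀ N : (G.induce A).Subgraph, N.IsPerfectMatching → N = N₀ := by
    intro N hN
    -- build a perfect matching of G from N and M
    have hMsymm : ∀ v w, v ∉ A → M.Adj v w → w ∉ A := by
      intro v w hv hvw hw
      exact hv (hkeep w v hw (M.adj_symm hvw))
    let M' : G.Subgraph :=
      { verts := Set.univ
        Adj := fun v w =>
          (∃ hv : v ∈ A, ∃ hw : w ∈ A, N.Adj ⟨v, hv⟩ ⟨w, hw⟩) ∨ (v ∉ A ∧ M.Adj v w)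
        adj_sub := by
          rintro v w (⟨hv, hw, h⟩ | ⟨-, h⟩)
          · exact (hindadj _ _).mp (N.adj_sub h)
          · exact M.adj_sub h
        edge_vert := fun _ => Set.mem_univ _
        symm := by
          constructor
          rintro v w (⟨hv, hw, h⟩ | ⟨hv, h⟩)
          · exact Or.inl ⟨hw, hv, N.adj_symm h⟩
          · exact Or.inr ⟨hMsymm v w hv h, M.adj_symm h⟩ }
    have hM' : M'.IsPerfectMatching := by
      constructor
      · intro v _
        by_cases hv : v ∈ A
        · obtain ⟨b, hb, hbu⟩ := hN.1 (hN.2 ⟨v, hv⟩)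
          refine ⟨b.1, Or.inl ⟨hv, b.2, hb⟩, ?_⟩
          rintro u (⟨hv', hu, h⟩ | ⟨hv', -⟩)
          · exact congrArg Subtype.val (hbu ⟨u, hu⟩ h)
          · exact absurd hv hv'
        · obtain ⟨w, hw, -⟩ := hM.1 (hM.2 v)
          refine ⟨w, Or.inr ⟨hv, hw⟩, ?_⟩
          rintro u (⟨hv', -⟩ | ⟨-, h⟩)
          · exact absurd hv' hv
          · exact huniq v u w h hw
      · intro v; exact Set.mem_univ _
    have hSM' : S ⊆ M'.edgeSet := by
      intro e heS
      have heM := hS heS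
      induction e using Sym2.ind with
      | _ a b =>
        rw [SimpleGraph.Subgraph.mem_edgeSet] at heM ⊢
        have ha : a ∉ A := fun h => h _ heS (Sym2.mem_mk_left a b)
        exact Or.inr ⟨ha, heM⟩
    have hMM' : M' = M := hforce M' hM' hSM'
    -- conclude N = N₀
    have hadj : ∀ a b : A, M'.Adj a.1 b.1 ↔ M.Adj a.1 b.1 := by
      intro a b; rw [hMM']
    apply SimpleGraph.Subgraph.ext
    · rw [SimpleGraph.Subgraph.isSpanning_iff.mp hN.2]
    · funext a b
      apply propext
      constructor
      · intro h
        exact (hadj a b).mp (Or.inl ⟨a.2, b.2, h⟩)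
      · intro h
        obtain ⟨c, hc, -⟩ := hN.1 (hN.2 a)
        have : M.Adj a.1 c.1 := (hadj a c).mp (Or.inl ⟨a.2, c.2, hc⟩)
        have : c = b := Subtype.ext (huniq a.1 c.1 b.1 this h)
        exact this ▸ hc
  have hAk : A.ncard ≤ k := hk A ⟨N₀, hN₀, huniqN⟩
  -- counting: each vertex outside A is covered by its (unique) M-edge, which lies in S
  -- the M-edge map
  let pa : V → V := fun v => (hM.1 (hM.2 v)).choose
  have hpa : ∀ v, M.Adj v (pa v) := fun v => (hM.1 (hM.2 v)).choose_spec.1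
  let f : V → Sym2 V := fun v => s(v, pa v)
  have hfS : ∀ v, v ∉ A → f v ∈ S := by
    intro v hv
    simp only [hA, Set.mem_setOf_eq, not_forall] at hv
    obtain ⟨e, heS, hve'⟩ := hv
    have hve := not_not.mp hve'
    have heM := hS heS
    induction e using Sym2.ind with
    | _ a b =>
      rw [SimpleGraph.Subgraph.mem_edgeSet] at heM
      rcases Sym2.mem_iff.mp hve with rfl | rfl
      · have : pa v = b := huniq v (pa v) b (hpa v) heM
        simpa [f, this] using heS
      · have : pa v = a := huniq v (pa v) a (hpa v) (M.adj_symm heM)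
        have : f v = s(a, v) := by simp [f, this, Sym2.eq_swap]
        rwa [this]
  -- finset counting
  have hSfin : S.Finite := Set.toFinite S
  have hsub : Finset.image f Aᶜ.toFinset ⊆ hSfin.toFinset := by
    intro e he
    obtain ⟨v, hv, rfl⟩ := Finset.mem_image.mp he
    rw [Set.mem_toFinset] at hv
    exact hSfin.mem_toFinset.mpr (hfS v hv)
  have hcard2 : Aᶜ.toFinset.card ≤ 2 * S.ncard := by
    have h1 := Finset.card_le_mul_card_image (f := f) Aᶜ.toFinset 2 ?_
    · calc Aᶜ.toFinset.card ≤ 2 * (Finset.image f Aᶜ.toFinset).card := h1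
        _ ≤ 2 * hSfin.toFinset.card := by
            exact Nat.mul_le_mul_left 2 (Finset.card_le_card hsub)
        _ = 2 * S.ncard := by rw [Set.ncard_eq_toFinset_card S hSfin]
    · intro e he
      induction e using Sym2.ind with
      | _ a b =>
        have : Finset.filter (fun v => f v = s(a, b)) Aᶜ.toFinset ⊆ {a, b} := by
          intro v hv
          have hfv := (Finset.mem_filter.mp hv).2
          have : v ∈ f v := Sym2.mem_mk_left v (pa v)
          rw [hfv] at this
          simpa using this
        calc (Finset.filter (fun v => f v = s(a, b)) Aᶜ.toFinset).card
            ≤ ({a, b} : Finset V).card := Finset.card_le_card this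
          _ ≤ 2 := Finset.card_insert_le a {b} |>.trans (by simp)
  have hsplit : A.toFinset.card + Aᶜ.toFinset.card = Fintype.card V := by
    rw [Set.toFinset_compl]
    exact Finset.card_add_card_compl A.toFinset
  have hAcard : A.ncard = A.toFinset.card := Set.ncard_eq_toFinset_card' A
  omega
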